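/- Let γ_k > 0 for all k and u₀ ∈ H_δ(𝕋) where δ_k = (1+k²)²/γ_k. Then the solution of the linear damped BBM equation satisfies ‖u(t)‖_{H¹}² ≤ min( (e^{−1}/(2t)) |u₀|_δ², ‖u₀‖_{H¹}² ) for all t > 0. -/

import Mathlib

lemma aux_xexp (x : ℝ) (hx : 0 ≤ x) : x * Real.exp (-x) ≤ Real.exp (-1) := by
  have h := Real.add_one_le_exp (x - 1)
  have hx' : x ≤ Real.exp (x - 1) := by linarith
  calc x * Real.exp (-x) ≤ Real.exp (x - 1) * Real.exp (-x) :=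
        mul_le_mul_of_nonneg_right hx' (Real.exp_nonneg _)
    _ = Real.exp (-1) := by rw [← Real.exp_add]; ring_nf

/-- With `γ k > 0` and `u₀ ∈ H_δ`, `δ k = (1+k²)²/γ k`, the mode-wise
solution of linear damped BBM satisfies
`‖u(t)‖_{H¹}² ≤ min((e⁻¹/(2t)) |u₀|_δ², ‖u₀‖_{H¹}²)` for all `t > 0`. -/
theorem stmt7 (γ : ℤ → ℝ) (hγ : ∀ k, 0 < γ k) (u : ℝ → ℤ → ℂ) (u₀ : ℤ → ℂ)
    (hsol : ∀ t k, u t k =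
      Complex.exp (-(((γ k : ℂ) + Complex.I * (k : ℂ)) / (1 + (k : ℂ) ^ 2)) * t) * u₀ k)
    (hδ : Summable fun k : ℤ => ((1 + (k : ℝ) ^ 2) ^ 2 / γ k) * ‖u₀ k‖ ^ 2)
    (hH1 : Summable fun k : ℤ => (1 + (k : ℝ) ^ 2) * ‖u₀ k‖ ^ 2) :
    ∀ t > 0, (∑' k : ℤ, (1 + (k : ℝ) ^ 2) * ‖u t k‖ ^ 2) ≤
      min ((Real.exp (-1) / (2 * t)) * ∑' k : ℤ, ((1 + (k : ℝ) ^ 2) ^ 2 / γ k) * ‖u₀ k‖ ^ 2)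
        (∑' k : ℤ, (1 + (k : ℝ) ^ 2) * ‖u₀ k‖ ^ 2) := by
  intro t ht
  -- norm of each mode
  have hnorm : ∀ k : ℤ, ‖u t k‖ ^ 2
      = Real.exp (-(2 * γ k * t / (1 + (k : ℝ) ^ 2))) * ‖u₀ k‖ ^ 2 := by
    intro k
    have ha : (0 : ℝ) < 1 + (k : ℝ) ^ 2 := by positivity
    have hne : (1 + (k : ℂ) ^ 2) ≠ 0 := by
      have h1 : (1 + (k : ℂ) ^ 2) = ((1 + (k : ℝ) ^ 2 : ℝ) : ℂ) := by push_cast; ring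
      rw [h1]
      exact_mod_cast ne_of_gt ha
    have hzeq : -(((γ k : ℂ) + Complex.I * (k : ℂ)) / (1 + (k : ℂ) ^ 2)) * (t : ℂ)
        = Complex.ofReal (-(γ k * t / (1 + (k : ℝ) ^ 2)))
          + Complex.ofReal (-((k : ℝ) * t / (1 + (k : ℝ) ^ 2))) * Complex.I := by
      push_cast
      field_simp
      ring
    have hre : (-(((γ k : ℂ) + Complex.I * (k : ℂ)) / (1 + (k : ℂ) ^ 2)) * (t : ℂ)).re
        = -(γ k * t / (1 + (k : ℝ) ^ 2)) := by
      rw [hzeq]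
      simp only [Complex.add_re, Complex.ofReal_re, Complex.mul_re, Complex.I_re,
        Complex.I_im, Complex.ofReal_im]
      ring
    have hnu : ‖u t k‖ = Real.exp (-(γ k * t / (1 + (k : ℝ) ^ 2))) * ‖u₀ k‖ := by
      rw [hsol t k, norm_mul, Complex.norm_exp, hre]
    rw [hnu, mul_pow, sq (Real.exp _), ← Real.exp_add]
    ring_nf
  have hnonneg : ∀ k : ℤ, 0 ≤ (1 + (k : ℝ) ^ 2) * ‖u t k‖ ^ 2 := fun k => by positivity
  -- termwise bound 2 : ≤ (1+k²)‖u₀ k‖²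
  have hb2 : ∀ k : ℤ, (1 + (k : ℝ) ^ 2) * ‖u t k‖ ^ 2
      ≤ (1 + (k : ℝ) ^ 2) * ‖u₀ k‖ ^ 2 := by
    intro k
    rw [hnorm k]
    have ha : (0 : ℝ) < 1 + (k : ℝ) ^ 2 := by positivity
    have hE : Real.exp (-(2 * γ k * t / (1 + (k : ℝ) ^ 2))) ≤ 1 := by
      apply Real.exp_le_one_iff.mpr
      have hg := hγ k
      have : 0 ≤ 2 * γ k * t / (1 + (k : ℝ) ^ 2) := by positivity
      linarith
    have hEn : Real.exp (-(2 * γ k * t / (1 + (k : ℝ) ^ 2))) * ‖u₀ k‖ ^ 2 ≤ ‖u₀ k‖ ^ 2 := by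
      nlinarith [sq_nonneg ‖u₀ k‖, Real.exp_nonneg (-(2 * γ k * t / (1 + (k : ℝ) ^ 2)))]
    exact mul_le_mul_of_nonneg_left hEn ha.le
  -- summability of LHS
  have hsum : Summable fun k : ℤ => (1 + (k : ℝ) ^ 2) * ‖u t k‖ ^ 2 :=
    Summable.of_nonneg_of_le hnonneg hb2 hH1
  -- termwise bound 1
  have hb1 : ∀ k : ℤ, (1 + (k : ℝ) ^ 2) * ‖u t k‖ ^ 2
      ≤ (Real.exp (-1) / (2 * t)) * (((1 + (k : ℝ) ^ 2) ^ 2 / γ k) * ‖u₀ k‖ ^ 2) := by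
    intro k
    rw [hnorm k]
    set a : ℝ := 1 + (k : ℝ) ^ 2 with hadef
    have ha : (0 : ℝ) < a := by rw [hadef]; positivity
    have hg : (0 : ℝ) < γ k := hγ k
    set E : ℝ := Real.exp (-(2 * γ k * t / a)) with hEdef
    have haux : (2 * γ k * t / a) * E ≤ Real.exp (-1) :=
      aux_xexp _ (by positivity)
    have key : a * E ≤ (Real.exp (-1) / (2 * t)) * (a ^ 2 / γ k) := by
      have h2 := mul_le_mul_of_nonneg_left haux
        (le_of_lt (by positivity : (0 : ℝ) < a ^ 2 / (2 * γ k * t)))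
      calc a * E = a ^ 2 / (2 * γ k * t) * ((2 * γ k * t / a) * E) := by
            field_simp
          _ ≤ a ^ 2 / (2 * γ k * t) * Real.exp (-1) := h2
          _ = (Real.exp (-1) / (2 * t)) * (a ^ 2 / γ k) := by
            field_simp
    calc a * (E * ‖u₀ k‖ ^ 2) = (a * E) * ‖u₀ k‖ ^ 2 := by ring
      _ ≤ ((Real.exp (-1) / (2 * t)) * (a ^ 2 / γ k)) * ‖u₀ k‖ ^ 2 :=
          mul_le_mul_of_nonneg_right key (by positivity)
      _ = (Real.exp (-1) / (2 * t)) * ((a ^ 2 / γ k) * ‖u₀ k‖ ^ 2) := by ring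
  apply le_min
  · calc (∑' k : ℤ, (1 + (k : ℝ) ^ 2) * ‖u t k‖ ^ 2)
        ≤ ∑' k : ℤ, (Real.exp (-1) / (2 * t)) * (((1 + (k : ℝ) ^ 2) ^ 2 / γ k) * ‖u₀ k‖ ^ 2) :=
          Summable.tsum_le_tsum hb1 hsum (hδ.mul_left _)
      _ = (Real.exp (-1) / (2 * t)) * ∑' k : ℤ, ((1 + (k : ℝ) ^ 2) ^ 2 / γ k) * ‖u₀ k‖ ^ 2 :=
          tsum_mul_left
  · exact Summable.tsum_le_tsum hb2 hsum hH1
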